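/- With f as above, for every 0 ≤ k ≤ d, the minimum of f over vectors supported on the first k coordinates equals −λ²·L·k/(4n(k+1)), i.e., min{ f(x) : [x]_j = 0 for all j > k } = −λ²Lk/(4n(k+1)). -/

import Mathlib

open Matrix Finset

lemma stmt11_expand (s : Finset ℕ) (p q : ℕ → ℝ) :
    ∑ i ∈ s, (p i + q i)^2 = ∑ i ∈ s, (p i)^2 + 2*∑ i ∈ s, p i * q i + ∑ i ∈ s, (q i)^2 := by
  rw [Finset.mul_sum, ← Finset.sum_add_distrib, ← Finset.sum_add_distrib]
  exact Finset.sum_congr rfl fun i _ => by ring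

lemma stmt11_shift (g : ℕ → ℝ) (D : ℕ) (hgD : g D = 0) :
    ∑ i ∈ range D, g i * (if i = 0 then 0 else g (i-1)) = ∑ i ∈ range D, g i * g (i+1) := by
  rcases D with _ | e
  · simp
  · rw [Finset.sum_range_succ' (fun i => g i * (if i = 0 then 0 else g (i-1))) e,
        Finset.sum_range_succ (fun i => g i * g (i+1)) e]
    simp [hgD]
    exact Finset.sum_congr rfl (fun i _ => mul_comm _ _)

lemma stmt11_quad (g : ℕ → ℝ) (D : ℕ) (hgD : g D = 0) :
    ∑ i ∈ range (D+1), ((if i = 0 then 0 else g (i-1)) - g i)^2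
      = ∑ j ∈ range D, (2*(g j)^2 - g j * g (j+1) - g j * (if j = 0 then 0 else g (j-1))) := by
  have h1 : ∑ i ∈ range (D+1), ((if i = 0 then 0 else g (i-1)) - g i)^2
      = (∑ i ∈ range (D+1), (if i = 0 then 0 else g (i-1))^2)
        - 2*∑ i ∈ range (D+1), (if i = 0 then 0 else g (i-1)) * g i
        + ∑ i ∈ range (D+1), (g i)^2 := by
    rw [Finset.mul_sum, ← Finset.sum_sub_distrib, ← Finset.sum_add_distrib]
    exact Finset.sum_congr rfl fun i _ => by ring
  rw [h1]
  have h2 : ∑ i ∈ range (D+1), (if i = 0 then 0 else g (i-1))^2 = ∑ j ∈ range D, (g j)^2 := by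
    rw [Finset.sum_range_succ' (fun i => (if i = 0 then 0 else g (i-1))^2) D]; simp
  have h3 : ∑ i ∈ range (D+1), (g i)^2 = ∑ j ∈ range D, (g j)^2 := by
    rw [Finset.sum_range_succ]; simp [hgD]
  have h4 : ∑ i ∈ range (D+1), (if i = 0 then 0 else g (i-1)) * g i
      = ∑ j ∈ range D, g j * g (j+1) := by
    rw [Finset.sum_range_succ' (fun i => (if i = 0 then 0 else g (i-1)) * g i) D]; simp
  rw [h2, h3, h4]
  rw [Finset.sum_sub_distrib, Finset.sum_sub_distrib, stmt11_shift g D hgD, ← Finset.mul_sum]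
  ring

lemma stmt11_cross (g : ℕ → ℝ) (lam : ℝ) (k D : ℕ) (hkD : k ≤ D) (hgk : ∀ j, k ≤ j → g j = 0) :
    ∑ i ∈ range (D+1), (((if i = 0 then 0 else g (i-1)) - g i) *
      (if i = 0 then lam * k / ((k:ℝ)+1) else if i ≤ k then -(lam/((k:ℝ)+1)) else 0))
      = -(lam * g 0) := by
  have hk1 : (k:ℝ) + 1 ≠ 0 := by positivity
  rw [← Finset.sum_subset (Finset.range_subset_range.2 (by omega) : range (k+1) ⊆ range (D+1))]
  · rw [Finset.sum_range_succ']
    have h1 : ∀ i ∈ range k, ((if i+1 = 0 then 0 else g (i+1-1)) - g (i+1)) *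
        (if i+1 = 0 then lam * k / ((k:ℝ)+1) else if i+1 ≤ k then -(lam/((k:ℝ)+1)) else 0)
        = (g i - g (i+1)) * (-(lam/((k:ℝ)+1))) := by
      intro i hi
      rw [Finset.mem_range] at hi
      rw [if_neg (by omega), if_neg (by omega), if_pos (by omega)]
      simp
    rw [Finset.sum_congr rfl h1, ← Finset.sum_mul, Finset.sum_range_sub' g k, hgk k le_rfl]
    simp only [if_pos rfl, ↓reduceIte]
    field_simp
    ring
  · intro i hiD hik
    rw [Finset.mem_range] at hiD hik
    rw [if_neg (show ¬ i = 0 by omega), if_neg (show ¬ i = 0 by omega),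
        if_neg (show ¬ i ≤ k by omega), mul_zero]

lemma stmt11_csq (lam : ℝ) (k D : ℕ) (hkD : k ≤ D) :
    ∑ i ∈ range (D+1),
      (if i = 0 then lam * k / ((k:ℝ)+1) else if i ≤ k then -(lam/((k:ℝ)+1)) else 0)^2
      = lam^2 * k / ((k:ℝ)+1) := by
  have hk1 : ((k:ℝ)+1) ≠ 0 := by positivity
  rw [← Finset.sum_subset (Finset.range_subset_range.2 (by omega) : range (k+1) ⊆ range (D+1))]
  · rw [Finset.sum_range_succ']
    have h1 : ∀ i ∈ range k,
        (if i+1 = 0 then lam * k / ((k:ℝ)+1) else if i+1 ≤ k then -(lam/((k:ℝ)+1)) else 0)^2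
        = (lam/((k:ℝ)+1))^2 := by
      intro i hi
      rw [Finset.mem_range] at hi
      rw [if_neg (by omega), if_pos (by omega)]
      ring
    rw [Finset.sum_congr rfl h1, Finset.sum_const, Finset.card_range, if_pos rfl,
        nsmul_eq_mul]
    field_simp
    ring
  · intro i hiD hik
    rw [Finset.mem_range] at hiD hik
    rw [if_neg (show ¬ i = 0 by omega), if_neg (show ¬ i ≤ k by omega)]
    norm_num

lemma stmt11_quadfin (d : ℕ) (M : Matrix (Fin d) (Fin d) ℝ)
    (hM : ∀ i j : Fin d,
      M i j = if i = j then 2 else if |(i : ℤ) - (j : ℤ)| = 1 then -1 else 0)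
    (x : Fin d → ℝ) (g : ℕ → ℝ)
    (hgx : ∀ i : Fin d, g i.1 = x i) (hg0 : ∀ j, d ≤ j → g j = 0) :
    x ⬝ᵥ M.mulVec x = ∑ j ∈ range d,
      (2*(g j)^2 - g j * g (j+1) - g j * (if j = 0 then 0 else g (j-1))) := by
  have hM' : ∀ i j : Fin d, M i j = (if i = j then 2 else 0)
      - (if (i:ℕ)+1 = (j:ℕ) then 1 else 0) - (if (j:ℕ)+1 = (i:ℕ) then 1 else 0) := by
    intro i j
    simp only [hM, abs_eq (show (0:ℤ) ≤ 1 by norm_num), Fin.ext_iff]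
    split_ifs <;> (first | (exfalso; omega) | norm_num)
  have inner : ∀ i : Fin d, (M.mulVec x) i
      = 2 * x i - g (i.1+1) - (if (i:ℕ) = 0 then 0 else g (i.1-1)) := by
    intro i
    simp only [mulVec, dotProduct]
    have e1 : ∑ j : Fin d, (if i = j then (2:ℝ) else 0) * x j = 2 * x i := by
      simp [ite_mul, Finset.sum_ite_eq]
    have e2 : ∑ j : Fin d, (if (i:ℕ)+1 = (j:ℕ) then (1:ℝ) else 0) * x j = g (i.1+1) := by
      by_cases h : i.1 + 1 < d
      · rw [Finset.sum_eq_single (⟨i.1+1, h⟩ : Fin d)]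
        · rw [if_pos rfl, one_mul, ← hgx]
        · intro j _ hj
          rw [if_neg (fun hc => hj (Fin.ext (by simpa using hc.symm))), zero_mul]
        · simp
      · rw [Finset.sum_eq_zero, hg0 _ (by omega)]
        intro j _
        rw [if_neg (by omega : ¬ (i:ℕ)+1 = (j:ℕ)), zero_mul]
    have e3 : ∑ j : Fin d, (if (j:ℕ)+1 = (i:ℕ) then (1:ℝ) else 0) * x j
        = (if (i:ℕ) = 0 then 0 else g (i.1-1)) := by
      by_cases h0 : (i:ℕ) = 0
      · rw [if_pos h0, Finset.sum_eq_zero]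
        intro j _
        rw [if_neg (by omega), zero_mul]
      · rw [if_neg h0]
        have h : i.1 - 1 < d := by omega
        rw [Finset.sum_eq_single (⟨i.1-1, h⟩ : Fin d)]
        · rw [if_pos (by simp; omega), one_mul, ← hgx]
        · intro j _ hj
          rw [if_neg (fun hc => hj (Fin.ext (by simp at hc ⊢; omega))), zero_mul]
        · simp
    calc ∑ j, M i j * x j
        = ∑ j : Fin d, ((if i = j then (2:ℝ) else 0) * x j
            - (if (i:ℕ)+1 = (j:ℕ) then (1:ℝ) else 0) * x j
            - (if (j:ℕ)+1 = (i:ℕ) then (1:ℝ) else 0) * x j) := by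
          refine Finset.sum_congr rfl fun j _ => ?_
          rw [hM']; ring
      _ = 2 * x i - g (i.1+1) - (if (i:ℕ) = 0 then 0 else g (i.1-1)) := by
          rw [Finset.sum_sub_distrib, Finset.sum_sub_distrib, e1, e2, e3]
  have key : x ⬝ᵥ M.mulVec x = ∑ i : Fin d, (fun j : ℕ =>
      2*(g j)^2 - g j * g (j+1) - g j * (if j = 0 then 0 else g (j-1))) i.1 := by
    simp only [dotProduct]
    refine Finset.sum_congr rfl fun i _ => ?_
    rw [inner i, ← hgx i]
    by_cases h0 : (i:ℕ) = 0
    · simp only [if_pos h0]; ring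
    · simp only [if_neg h0]; ring
  rw [key]
  exact Fin.sum_univ_eq_sum_range
    (fun j : ℕ => 2*(g j)^2 - g j * g (j+1) - g j * (if j = 0 then 0 else g (j-1))) d

theorem stmt_11 (d n : ℕ) (hd : 0 < d) (hn : 1 ≤ n) (L lam : ℝ) (hL : 0 < L) (hlam : lam ≠ 0)
    (M : Matrix (Fin d) (Fin d) ℝ)
    (hM : ∀ i j : Fin d,
      M i j = if i = j then 2 else if |(i : ℤ) - (j : ℤ)| = 1 then -1 else 0)
    (f : (Fin d → ℝ) → ℝ)
    (hf : ∀ x, f x = L / (4 * n) * (x ⬝ᵥ M.mulVec x - 2 * lam * x ⟨0, hd⟩))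
    (k : ℕ) (hk : k ≤ d) :
    IsLeast (f '' {x | ∀ j : Fin d, k ≤ (j : ℕ) → x j = 0})
      (-(lam ^ 2) * L * k / (4 * n * (k + 1))) := by
  have hn0 : (0:ℝ) < (n:ℝ) := by exact_mod_cast Nat.lt_of_lt_of_le Nat.zero_lt_one hn
  have hk1 : ((k:ℝ)+1) ≠ 0 := by positivity
  have hc4 : (0:ℝ) < L / (4*(n:ℝ)) := by positivity
  set c : ℕ → ℝ := fun i =>
    if i = 0 then lam * k / ((k:ℝ)+1) else if i ≤ k then -(lam/((k:ℝ)+1)) else 0 with hcdef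
  set g : (Fin d → ℝ) → ℕ → ℝ := fun x j => if h : j < d then x ⟨j, h⟩ else 0 with hgdef
  have key : ∀ x : Fin d → ℝ, (∀ j : Fin d, k ≤ (j:ℕ) → x j = 0) →
      f x = L/(4*(n:ℝ)) * ((∑ i ∈ range (d+1),
        ((if i = 0 then 0 else g x (i-1)) - g x i + c i)^2) - lam^2 * k / ((k:ℝ)+1)) := by
    intro x hx
    have hg0 : ∀ j, d ≤ j → g x j = 0 := by
      intro j hj
      simp only [hgdef]
      rw [dif_neg (by omega)]
    have hgx : ∀ i : Fin d, g x i.1 = x i := by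
      intro i
      simp only [hgdef]
      rw [dif_pos i.2]
    have hgk : ∀ j, k ≤ j → g x j = 0 := by
      intro j hj
      by_cases hjd : j < d
      · exact (hgx ⟨j, hjd⟩).trans (hx ⟨j, hjd⟩ hj)
      · exact hg0 j (by omega)
    have quad := stmt11_quadfin d M hM x (g x) hgx hg0
    have qsq := stmt11_quad (g x) d (hg0 d le_rfl)
    have cross := stmt11_cross (g x) lam k d hk hgk
    have csq := stmt11_csq lam k d hk
    have hg00 : g x 0 = x ⟨0, hd⟩ := hgx ⟨0, hd⟩
    rw [hf x, quad, ← qsq, ← hg00,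
        stmt11_expand (range (d+1)) (fun i => (if i = 0 then 0 else g x (i-1)) - g x i) c,
        cross, csq]
    ring
  constructor
  · refine ⟨fun j : Fin d => if (j:ℕ) < k then lam * ((k:ℝ) - (j:ℕ)) / ((k:ℝ)+1) else 0,
      fun j hj => if_neg (by omega), ?_⟩
    set xs : Fin d → ℝ :=
      fun j : Fin d => if (j:ℕ) < k then lam * ((k:ℝ) - (j:ℕ)) / ((k:ℝ)+1) else 0 with hxs
    have hgs : ∀ j : ℕ, g xs j = if j < k then lam * ((k:ℝ) - (j:ℕ)) / ((k:ℝ)+1) else 0 := by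
      intro j
      by_cases hjd : j < d
      · simp only [hgdef]; rw [dif_pos hjd]
      · simp only [hgdef]; rw [dif_neg hjd, if_neg (by omega)]
    rw [key xs (fun j hj => if_neg (by omega))]
    have hS : ∑ i ∈ range (d+1), ((if i = 0 then 0 else g xs (i-1)) - g xs i + c i)^2 = 0 := by
      refine Finset.sum_eq_zero fun i _ => ?_
      have hbase : ((if i = 0 then 0 else g xs (i-1)) - g xs i + c i) = 0 := by
        rcases Nat.eq_zero_or_pos i with rfl | hi
        · have hc0 : c 0 = lam * k / ((k:ℝ)+1) := by simp [hcdef]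
          rw [if_pos rfl, hgs 0, hc0]
          rcases Nat.eq_zero_or_pos k with rfl | hk0
          · norm_num
          · rw [if_pos hk0]
            push_cast
            ring
        · rw [if_neg (show ¬ i = 0 by omega), hgs (i-1), hgs i]
          by_cases hik : i ≤ k
          · have hc : c i = -(lam/((k:ℝ)+1)) := by
              simp only [hcdef]
              rw [if_neg (show ¬ i = 0 by omega), if_pos hik]
            rw [hc, if_pos (show i - 1 < k by omega),
                Nat.cast_sub (show 1 ≤ i by omega)]
            by_cases hik' : i < k
            · rw [if_pos hik']
              push_cast
              ring
            · rw [if_neg hik']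
              have hik2 : (i:ℝ) = (k:ℝ) := by exact_mod_cast congrArg Nat.cast (by omega : i = k)
              rw [hik2]
              push_cast
              ring
          · have hc : c i = 0 := by
              simp only [hcdef]
              rw [if_neg (show ¬ i = 0 by omega), if_neg hik]
            rw [hc, if_neg (show ¬ i - 1 < k by omega), if_neg (show ¬ i < k by omega)]
            ring
      rw [hbase]
      norm_num
    rw [hS]
    field_simp
    ring
  · rintro y ⟨x, hx, rfl⟩
    rw [key x hx]
    have hS : 0 ≤ ∑ i ∈ range (d+1), ((if i = 0 then 0 else g x (i-1)) - g x i + c i)^2 :=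
      Finset.sum_nonneg fun i _ => sq_nonneg _
    have htarget : -(lam ^ 2) * L * (k:ℝ) / (4 * (n:ℝ) * ((k:ℝ) + 1))
        = L/(4*(n:ℝ)) * (0 - lam^2 * k / ((k:ℝ)+1)) := by
      field_simp
      ring
    rw [htarget]
    apply mul_le_mul_of_nonneg_left _ (le_of_lt hc4)
    linarith
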